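/- Let σ_c, σ_n, σ_γ > 0, set f = σ_c² + σ_n², let T ≥ 2 be an integer, and for each t ≥ 1 define b_t = (σ_c² σ_n²/f) · ( 1 + σ_c² σ_γ² / ( (t−1) σ_γ² σ_n² + f σ_n² ) ). Then Σ_{t=1}^T b_t ≤ (σ_c² σ_n²/f) T + σ_c⁴ σ_γ²/f² + (σ_c⁴/f)(1 + log(T−1)). -/

import Mathlib

open Real Finset

/-- Bound on the sum of the predictive posterior variances `b_t` in the isotropic Gaussian
case: `∑_{t=1}^T b_t ≤ (σc²σn²/f)T + σc⁴σγ²/f² + (σc⁴/f)(1 + log(T−1))`. -/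
theorem sum_posterior_variance_bound (σc σn σγ : ℝ)
    (hc : 0 < σc) (hn : 0 < σn) (hγ : 0 < σγ)
    (f : ℝ) (hf : f = σc ^ 2 + σn ^ 2) (T : ℕ) (hT : 2 ≤ T)
    (b : ℕ → ℝ)
    (hb : ∀ t : ℕ, b t = (σc ^ 2 * σn ^ 2 / f)
      * (1 + σc ^ 2 * σγ ^ 2 / (((t : ℝ) - 1) * σγ ^ 2 * σn ^ 2 + f * σn ^ 2))) :
    ∑ t ∈ Finset.Icc 1 T, b t
      ≤ (σc ^ 2 * σn ^ 2 / f) * T + σc ^ 4 * σγ ^ 2 / f ^ 2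
        + (σc ^ 4 / f) * (1 + Real.log ((T : ℝ) - 1)) := by
  have hfpos : 0 < f := by rw [hf]; positivity
  set A := σc ^ 2 * σn ^ 2 / f with hA
  have hApos : 0 < A := by rw [hA]; positivity
  -- split off t = 1
  have hsplit : Finset.Icc 1 T = insert 1 (Finset.Icc 2 T) := by
    ext x; simp only [Finset.mem_Icc, Finset.mem_insert]; omega
  have hnotmem : (1 : ℕ) ∉ Finset.Icc 2 T := by simp
  rw [hsplit, Finset.sum_insert hnotmem]
  -- value at t = 1
  have hb1 : b 1 = A + σc ^ 4 * σγ ^ 2 / f ^ 2 := by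
    rw [hb 1, hA]
    push_cast
    field_simp
    ring
  -- pointwise bound on Icc 2 T
  have hbound : ∀ t ∈ Finset.Icc 2 T, b t ≤ A + (σc ^ 4 / f) * ((t : ℝ) - 1)⁻¹ := by
    intro t ht
    rw [Finset.mem_Icc] at ht
    have ht2 : (2 : ℝ) ≤ (t : ℝ) := by exact_mod_cast ht.1
    have htm : (0 : ℝ) < (t : ℝ) - 1 := by linarith
    rw [hb t, mul_add, mul_one]
    gcongr A + ?_
    have hD : ((t : ℝ) - 1) * σγ ^ 2 * σn ^ 2 ≤ ((t : ℝ) - 1) * σγ ^ 2 * σn ^ 2 + f * σn ^ 2 := by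
      nlinarith [sq_nonneg σn]
    have hDpos : 0 < ((t : ℝ) - 1) * σγ ^ 2 * σn ^ 2 := by positivity
    calc A * (σc ^ 2 * σγ ^ 2 / (((t : ℝ) - 1) * σγ ^ 2 * σn ^ 2 + f * σn ^ 2))
        ≤ A * (σc ^ 2 * σγ ^ 2 / (((t : ℝ) - 1) * σγ ^ 2 * σn ^ 2)) := by
          gcongr
      _ = (σc ^ 4 / f) * ((t : ℝ) - 1)⁻¹ := by
          rw [hA]; field_simp
  have hsum2 : ∑ t ∈ Finset.Icc 2 T, b t
      ≤ ∑ t ∈ Finset.Icc 2 T, (A + (σc ^ 4 / f) * ((t : ℝ) - 1)⁻¹) :=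
    Finset.sum_le_sum hbound
  -- harmonic reindexing
  have hre : ∑ t ∈ Finset.Icc 2 T, ((t : ℝ) - 1)⁻¹
      = ∑ k ∈ Finset.Icc 1 (T - 1), ((k : ℝ))⁻¹ := by
    refine Finset.sum_nbij' (fun t => t - 1) (fun k => k + 1) ?_ ?_ ?_ ?_ ?_
    · intro t ht; simp only [Finset.mem_Icc] at *; omega
    · intro k hk; simp only [Finset.mem_Icc] at *; omega
    · intro t ht; simp only [Finset.mem_Icc] at ht; omega
    · intro k hk; simp only [Finset.mem_Icc] at hk; omega
    · intro t ht; simp only [Finset.mem_Icc] at ht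
      congr 1
      have : (1:ℕ) ≤ t := by omega
      push_cast [Nat.cast_sub this]
      ring
  have hharm : ∑ k ∈ Finset.Icc 1 (T - 1), ((k : ℝ))⁻¹ ≤ 1 + Real.log ((T : ℝ) - 1) := by
    have := harmonic_le_one_add_log (T - 1)
    rw [harmonic_eq_sum_Icc] at this
    push_cast at this
    have hcast : ((T - 1 : ℕ) : ℝ) = (T : ℝ) - 1 := by
      have : (1:ℕ) ≤ T := by omega
      push_cast [Nat.cast_sub this]; ring
    rw [hcast] at this
    exact this
  -- assemble
  have hcard : (Finset.Icc 2 T).card = T - 1 := by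
    rw [Nat.card_Icc]; omega
  have hsum2' : ∑ t ∈ Finset.Icc 2 T, (A + (σc ^ 4 / f) * ((t : ℝ) - 1)⁻¹)
      = A * ((T : ℝ) - 1) + (σc ^ 4 / f) * ∑ t ∈ Finset.Icc 2 T, ((t : ℝ) - 1)⁻¹ := by
    rw [Finset.sum_add_distrib, Finset.sum_const, hcard, ← Finset.mul_sum]
    have : ((T - 1 : ℕ) : ℝ) = (T : ℝ) - 1 := by
      have : (1:ℕ) ≤ T := by omega
      push_cast [Nat.cast_sub this]; ring
    rw [nsmul_eq_mul, this]; ring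
  have hlast : (σc ^ 4 / f) * ∑ t ∈ Finset.Icc 2 T, ((t : ℝ) - 1)⁻¹
      ≤ (σc ^ 4 / f) * (1 + Real.log ((T : ℝ) - 1)) := by
    rw [hre]
    exact mul_le_mul_of_nonneg_left hharm (by positivity)
  calc b 1 + ∑ t ∈ Finset.Icc 2 T, b t
      ≤ (A + σc ^ 4 * σγ ^ 2 / f ^ 2)
        + (A * ((T : ℝ) - 1) + (σc ^ 4 / f) * ∑ t ∈ Finset.Icc 2 T, ((t : ℝ) - 1)⁻¹) := by
        rw [hb1]; exact add_le_add le_rfl (hsum2.trans_eq hsum2')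
    _ ≤ (A + σc ^ 4 * σγ ^ 2 / f ^ 2)
        + (A * ((T : ℝ) - 1) + (σc ^ 4 / f) * (1 + Real.log ((T : ℝ) - 1))) := by
        exact add_le_add le_rfl (add_le_add le_rfl hlast)
    _ = A * T + σc ^ 4 * σγ ^ 2 / f ^ 2 + (σc ^ 4 / f) * (1 + Real.log ((T : ℝ) - 1)) := by
        ring
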